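/- For all f, f* ∈ C[0,α₀] and all η ∈ [0,α₀], one has |F₁(η,f) − F₁(η,f*)| ≤ F̄₁(α₀)·‖f − f*‖, where F̄₁(α₀) = (α₀·a/L₁ₘ²)·(N̄₁·α₀^{2μ+1}/((μ+1)(2μ+1)) + L̄₁·N₁ᴹ·α₀^{3μ−ν+1}/(L₁ₘ·(2μ−ν+1)(3μ−ν+1))) + L̄₁·α₀^{2μ}/(2μ·L₁ₘ²). -/

import Mathlib

open Real Set Filter MeasureTheory Topology

noncomputable section

/-- Sup norm on `C[0,α₀]`. -/
def supIcc (α₀ : ℝ) (g : ℝ → ℝ) : ℝ := ⨆ η : Icc (0:ℝ) α₀, |g η.1|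

/-- `E₁(η,f) = exp(−α₀·a·∫₀^η N*(f)(s)/L*(f)(s) ds)`. -/
def E1 (α₀ a : ℝ) (Lstar Nstar : (ℝ → ℝ) → ℝ → ℝ) (f : ℝ → ℝ) (η : ℝ) : ℝ :=
  Real.exp (-(α₀ * a * ∫ s in (0:ℝ)..η, Nstar f s / Lstar f s))

/-- `F₁(η,f) = ∫₀^η E₁(s,f)/(s·L*(f)(s)) ds`. -/
def F1 (α₀ a : ℝ) (Lstar Nstar : (ℝ → ℝ) → ℝ → ℝ) (f : ℝ → ℝ) (η : ℝ) : ℝ :=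
  ∫ s in (0:ℝ)..η, E1 α₀ a Lstar Nstar f s / (s * Lstar f s)

lemma aux_exp {x y : ℝ} (hx : 0 ≤ x) (hy : 0 ≤ y) :
    |Real.exp (-x) - Real.exp (-y)| ≤ |x - y| := by
  wlog h : y ≤ x with H
  · rw [abs_sub_comm, abs_sub_comm x y]; exact H hy hx (not_le.mp h).le
  have h1 : Real.exp (-x) ≤ Real.exp (-y) := Real.exp_le_exp.mpr (by linarith)
  rw [abs_of_nonpos (by linarith), abs_of_nonneg (by linarith)]
  have h2 := Real.add_one_le_exp (y - x)
  have h3 : Real.exp (-x) = Real.exp (-y) * Real.exp (y - x) := by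
    rw [← Real.exp_add]; congr 1; ring
  have h4 : Real.exp (-y) ≤ 1 := Real.exp_le_one_iff.mpr (by linarith)
  have h5 := Real.exp_pos (-y)
  have h6 := Real.exp_pos (y - x)
  nlinarith

lemma aux_id (A B C D L P Q S d e1 e2 : ℝ) (hL : L ≠ 0) (hP : P ≠ 0) (hQ : Q ≠ 0)
    (hS : S ≠ 0) (h1 : e1 ≠ 0) (h2 : e2 ≠ 0) :
    A * (B / (L * e1) * (P * S) + C / (L ^ 2 * e2) * (P * (P * (Q⁻¹ * S)))) * d / (S * (L / P))
      + 1 * (D * d) / (S * (L / P * (L / P)))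
    = (A * (B / (L ^ 2 * e1) * (P * P) + C / (L ^ 3 * e2) * (P * (P * (P * Q⁻¹))))
        + D / L ^ 2 * (P * (P * S⁻¹))) * d := by
  field_simp

lemma aux_id2 (A B C D L d e1 e2 e3 e4 e5 X1 X2 X3 : ℝ) (hL : L ≠ 0) (h1 : e1 ≠ 0)
    (h2 : e2 ≠ 0) (h3 : e3 ≠ 0) (h4 : e4 ≠ 0) (h5 : e5 ≠ 0) :
    (A * (B / (L ^ 2 * e1) * (X1 / e3) + C / (L ^ 3 * e2) * (X2 / e4))
        + D / L ^ 2 * (X3 / e5)) * d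
    = (A / L ^ 2 * (B * X1 / (e1 * e3) + C * X2 / (L * (e2 * e4)))
        + D * X3 / (e5 * L ^ 2)) * d := by
  field_simp

theorem statement5
    (α₀ a μ ν L1m L1M N1m N1M Lbar1 Nbar1 : ℝ)
    (hα₀ : 0 < α₀) (ha : 0 < a)
    (hμpos : 0 < μ) (hνpos : 0 < ν) (hL1m : 0 < L1m) (hL1M : 0 < L1M)
    (hN1m : 0 < N1m) (hN1M : 0 < N1M) (hLbar1 : 0 < Lbar1) (hNbar1 : 0 < Nbar1)
    (hμ : max 1 ν < μ) (hLmM : L1m ≤ L1M) (hNmM : N1m ≤ N1M)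
    (Lstar Nstar : (ℝ → ℝ) → ℝ → ℝ)
    (hLcont : ∀ f : ℝ → ℝ, ContinuousOn f (Icc 0 α₀) → ContinuousOn (Lstar f) (Ioc 0 α₀))
    (hNcont : ∀ f : ℝ → ℝ, ContinuousOn f (Icc 0 α₀) → ContinuousOn (Nstar f) (Ioc 0 α₀))
    (hLbd : ∀ f : ℝ → ℝ, ContinuousOn f (Icc 0 α₀) → ∀ η ∈ Ioc (0:ℝ) α₀,
      L1m * η ^ (-μ) ≤ Lstar f η ∧ Lstar f η ≤ L1M * η ^ (-μ))
    (hNbd : ∀ f : ℝ → ℝ, ContinuousOn f (Icc 0 α₀) → ∀ η ∈ Ioc (0:ℝ) α₀,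
      N1m * η ^ (-ν) ≤ Nstar f η ∧ Nstar f η ≤ N1M * η ^ (-ν))
    (hLlip : ∀ f fs : ℝ → ℝ, ContinuousOn f (Icc 0 α₀) → ContinuousOn fs (Icc 0 α₀) →
      ∀ η ∈ Ioc (0:ℝ) α₀,
        |Lstar f η - Lstar fs η| ≤ Lbar1 * supIcc α₀ (fun x => f x - fs x))
    (hNlip : ∀ f fs : ℝ → ℝ, ContinuousOn f (Icc 0 α₀) → ContinuousOn fs (Icc 0 α₀) →
      ∀ η ∈ Ioc (0:ℝ) α₀,
        |Nstar f η - Nstar fs η| ≤ Nbar1 * supIcc α₀ (fun x => f x - fs x))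
    (hint1 : ∀ f : ℝ → ℝ, ContinuousOn f (Icc 0 α₀) → ∀ η ∈ Icc (0:ℝ) α₀,
      IntervalIntegrable (fun s => Nstar f s / Lstar f s) volume 0 η)
    (hint2 : ∀ f : ℝ → ℝ, ContinuousOn f (Icc 0 α₀) → ∀ η ∈ Icc (0:ℝ) α₀,
      IntervalIntegrable (fun s => E1 α₀ a Lstar Nstar f s / (s * Lstar f s)) volume 0 η)
    (f fs : ℝ → ℝ) (hf : ContinuousOn f (Icc 0 α₀)) (hfs : ContinuousOn fs (Icc 0 α₀))
    (η : ℝ) (hη : η ∈ Icc (0:ℝ) α₀) :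
    |F1 α₀ a Lstar Nstar f η - F1 α₀ a Lstar Nstar fs η| ≤
      ((α₀ * a / L1m ^ 2) * (Nbar1 * α₀ ^ (2 * μ + 1) / ((μ + 1) * (2 * μ + 1)) +
            Lbar1 * N1M * α₀ ^ (3 * μ - ν + 1) /
              (L1m * ((2 * μ - ν + 1) * (3 * μ - ν + 1)))) +
          Lbar1 * α₀ ^ (2 * μ) / (2 * μ * L1m ^ 2)) *
        supIcc α₀ (fun x => f x - fs x) := by
  have hμ1 : (1:ℝ) < μ := lt_of_le_of_lt (le_max_left _ _) hμ
  have hνμ : ν < μ := lt_of_le_of_lt (le_max_right _ _) hμ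
  set δ := supIcc α₀ (fun x => f x - fs x) with hδdef
  have hδ0 : 0 ≤ δ := Real.iSup_nonneg fun i => abs_nonneg _
  -- positivity of Lstar, Nstar on Ioc
  have hLpos : ∀ (g : ℝ → ℝ), ContinuousOn g (Icc 0 α₀) → ∀ t ∈ Ioc (0:ℝ) α₀,
      0 < Lstar g t := fun g hg t ht =>
    lt_of_lt_of_le (mul_pos hL1m (Real.rpow_pos_of_pos ht.1 _)) (hLbd g hg t ht).1
  have hNpos : ∀ (g : ℝ → ℝ), ContinuousOn g (Icc 0 α₀) → ∀ t ∈ Ioc (0:ℝ) α₀,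
      0 < Nstar g t := fun g hg t ht =>
    lt_of_lt_of_le (mul_pos hN1m (Real.rpow_pos_of_pos ht.1 _)) (hNbd g hg t ht).1
  have hLlow : ∀ (g : ℝ → ℝ), ContinuousOn g (Icc 0 α₀) → ∀ t ∈ Ioc (0:ℝ) α₀,
      L1m / t ^ μ ≤ Lstar g t := by
    intro g hg t ht
    have h1 := (hLbd g hg t ht).1
    rwa [Real.rpow_neg ht.1.le, ← div_eq_mul_inv] at h1
  -- Step A
  have hA : ∀ t ∈ Ioc (0:ℝ) α₀,
      |Nstar f t / Lstar f t - Nstar fs t / Lstar fs t| ≤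
        (Nbar1 / L1m * t ^ μ + Lbar1 * N1M / L1m ^ 2 * t ^ (2*μ - ν)) * δ := by
    intro t ht
    obtain ⟨ht0, htα⟩ := ht
    have hLf := hLpos f hf t ⟨ht0, htα⟩
    have hLfs := hLpos fs hfs t ⟨ht0, htα⟩
    have hNfs := hNpos fs hfs t ⟨ht0, htα⟩
    have hNd := hNlip f fs hf hfs t ⟨ht0, htα⟩
    have hLd : |Lstar fs t - Lstar f t| ≤ Lbar1 * δ := by
      rw [abs_sub_comm]; exact hLlip f fs hf hfs t ⟨ht0, htα⟩
    have hNfsub : Nstar fs t ≤ N1M * t ^ (-ν) := (hNbd fs hfs t ⟨ht0, htα⟩).2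
    have hLfl := hLlow f hf t ⟨ht0, htα⟩
    have hLfsl := hLlow fs hfs t ⟨ht0, htα⟩
    have hP : 0 < t ^ μ := Real.rpow_pos_of_pos ht0 μ
    have hQ : 0 < t ^ ν := Real.rpow_pos_of_pos ht0 ν
    have key : Nstar f t / Lstar f t - Nstar fs t / Lstar fs t
        = (Nstar f t - Nstar fs t) / Lstar f t
          + Nstar fs t * (Lstar fs t - Lstar f t) / (Lstar f t * Lstar fs t) := by
      field_simp; ring
    rw [key]
    calc |(Nstar f t - Nstar fs t) / Lstar f t
          + Nstar fs t * (Lstar fs t - Lstar f t) / (Lstar f t * Lstar fs t)|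
        ≤ |(Nstar f t - Nstar fs t) / Lstar f t|
          + |Nstar fs t * (Lstar fs t - Lstar f t) / (Lstar f t * Lstar fs t)| := abs_add_le _ _
      _ ≤ (Nbar1 * δ) / (L1m / t ^ μ)
          + (N1M * t ^ (-ν)) * (Lbar1 * δ) / ((L1m / t ^ μ) * (L1m / t ^ μ)) := by
          gcongr ?_ + ?_
          · rw [abs_div, abs_of_pos hLf]
            gcongr
          · rw [abs_div, abs_mul, abs_of_pos hNfs, abs_of_pos (mul_pos hLf hLfs)]
            gcongr
      _ = (Nbar1 / L1m * t ^ μ + Lbar1 * N1M / L1m ^ 2 * t ^ (2*μ - ν)) * δ := by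
          rw [Real.rpow_neg ht0.le, show (2*μ - ν) = μ + (μ + -ν) by ring,
            Real.rpow_add ht0, Real.rpow_add ht0, Real.rpow_neg ht0.le]
          field_simp
  -- nonnegativity of the exponent integrals
  have hXnn : ∀ (g : ℝ → ℝ), ContinuousOn g (Icc 0 α₀) → ∀ s ∈ Icc (0:ℝ) α₀,
      0 ≤ ∫ t in (0:ℝ)..s, Nstar g t / Lstar g t := by
    intro g hg s hs
    rw [intervalIntegral.integral_of_le hs.1]
    refine setIntegral_nonneg measurableSet_Ioc fun t ht => ?_
    have ht' : t ∈ Ioc (0:ℝ) α₀ := ⟨ht.1, ht.2.trans hs.2⟩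
    exact le_of_lt (div_pos (hNpos g hg t ht') (hLpos g hg t ht'))
  -- Step B : bound on E1 difference
  have hB : ∀ s ∈ Icc (0:ℝ) α₀,
      |E1 α₀ a Lstar Nstar f s - E1 α₀ a Lstar Nstar fs s| ≤
        α₀ * a * (Nbar1 / (L1m * (μ+1)) * s ^ (μ+1)
          + Lbar1 * N1M / (L1m^2 * (2*μ - ν + 1)) * s ^ (2*μ - ν + 1)) * δ := by
    intro s hs
    have hs0 : (0:ℝ) ≤ s := hs.1
    have hposc : (0:ℝ) ≤ α₀ * a := by positivity
    have hμ1' : (0:ℝ) < μ + 1 := by linarith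
    have hexp2 : (0:ℝ) < 2*μ - ν + 1 := by linarith
    have hInt1 : IntervalIntegrable (fun t : ℝ => t ^ μ) volume 0 s :=
      intervalIntegral.intervalIntegrable_rpow' (by linarith)
    have hInt2 : IntervalIntegrable (fun t : ℝ => t ^ (2*μ - ν)) volume 0 s :=
      intervalIntegral.intervalIntegrable_rpow' (by linarith)
    have hIntB : IntervalIntegrable
        (fun t : ℝ => (Nbar1 / L1m * t ^ μ + Lbar1 * N1M / L1m ^ 2 * t ^ (2*μ - ν)) * δ)
        volume 0 s :=
      ((hInt1.const_mul _).add (hInt2.const_mul _)).mul_const _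
    have hbnd : |∫ t in (0:ℝ)..s, (Nstar f t / Lstar f t - Nstar fs t / Lstar fs t)|
        ≤ |∫ t in (0:ℝ)..s,
            (Nbar1 / L1m * t ^ μ + Lbar1 * N1M / L1m ^ 2 * t ^ (2*μ - ν)) * δ| := by
      rw [← Real.norm_eq_abs (∫ t in (0:ℝ)..s, (Nstar f t / Lstar f t - Nstar fs t / Lstar fs t))]
      apply intervalIntegral.norm_integral_le_abs_of_norm_le _ hIntB
      refine (ae_restrict_iff' measurableSet_uIoc).mpr (ae_of_all _ fun t ht => ?_)
      rw [Set.uIoc_of_le hs0] at ht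
      rw [Real.norm_eq_abs]
      exact hA t ⟨ht.1, ht.2.trans hs.2⟩
    have hval : (∫ t in (0:ℝ)..s,
          (Nbar1 / L1m * t ^ μ + Lbar1 * N1M / L1m^2 * t ^ (2*μ - ν)) * δ)
        = (Nbar1 / L1m * (s ^ (μ+1) / (μ+1))
            + Lbar1 * N1M / L1m^2 * (s ^ (2*μ-ν+1) / (2*μ-ν+1))) * δ := by
      rw [intervalIntegral.integral_mul_const,
        intervalIntegral.integral_add (hInt1.const_mul _) (hInt2.const_mul _),
        intervalIntegral.integral_const_mul, intervalIntegral.integral_const_mul,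
        integral_rpow (Or.inl (by linarith)),
        integral_rpow (Or.inl (by linarith)),
        Real.zero_rpow (by linarith), Real.zero_rpow (by linarith)]
      ring
    have h1 : 0 ≤ s ^ (μ+1) := Real.rpow_nonneg hs0 _
    have h2 : 0 ≤ s ^ (2*μ-ν+1) := Real.rpow_nonneg hs0 _
    have hnn : 0 ≤ (Nbar1 / L1m * (s ^ (μ+1) / (μ+1))
        + Lbar1 * N1M / L1m^2 * (s ^ (2*μ-ν+1) / (2*μ-ν+1))) * δ := by
      apply mul_nonneg _ hδ0
      apply add_nonneg
      · exact mul_nonneg (by positivity) (div_nonneg h1 hμ1'.le)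
      · exact mul_nonneg (by positivity) (div_nonneg h2 hexp2.le)
    calc |E1 α₀ a Lstar Nstar f s - E1 α₀ a Lstar Nstar fs s|
        ≤ |(α₀ * a * ∫ t in (0:ℝ)..s, Nstar f t / Lstar f t)
            - α₀ * a * ∫ t in (0:ℝ)..s, Nstar fs t / Lstar fs t| :=
          aux_exp (mul_nonneg hposc (hXnn f hf s hs)) (mul_nonneg hposc (hXnn fs hfs s hs))
      _ = α₀ * a * |∫ t in (0:ℝ)..s, (Nstar f t / Lstar f t - Nstar fs t / Lstar fs t)| := by
          rw [← mul_sub, abs_mul, abs_of_nonneg hposc,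
            intervalIntegral.integral_sub (hint1 f hf s hs) (hint1 fs hfs s hs)]
      _ ≤ α₀ * a * |∫ t in (0:ℝ)..s,
            (Nbar1 / L1m * t ^ μ + Lbar1 * N1M / L1m^2 * t ^ (2*μ-ν)) * δ| :=
          mul_le_mul_of_nonneg_left hbnd hposc
      _ = _ := by rw [hval, abs_of_nonneg hnn]; field_simp
  -- Step C : pointwise bound on integrand difference
  have hC : ∀ s ∈ Ioc (0:ℝ) α₀,
      |E1 α₀ a Lstar Nstar f s / (s * Lstar f s)
        - E1 α₀ a Lstar Nstar fs s / (s * Lstar fs s)| ≤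
      (α₀ * a * (Nbar1 / (L1m^2 * (μ+1)) * s ^ (2*μ)
          + Lbar1 * N1M / (L1m^3 * (2*μ - ν + 1)) * s ^ (3*μ - ν))
        + Lbar1 / L1m^2 * s ^ (2*μ - 1)) * δ := by
    intro s hs
    obtain ⟨hs0, hsα⟩ := hs
    have hLf := hLpos f hf s ⟨hs0, hsα⟩
    have hLfs := hLpos fs hfs s ⟨hs0, hsα⟩
    have hLfl := hLlow f hf s ⟨hs0, hsα⟩
    have hLfsl := hLlow fs hfs s ⟨hs0, hsα⟩
    have hEb := hB s ⟨hs0.le, hsα⟩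
    have hposc : (0:ℝ) ≤ α₀ * a := by positivity
    have hEfs1 : E1 α₀ a Lstar Nstar fs s ≤ 1 :=
      Real.exp_le_one_iff.mpr (neg_nonpos.mpr (mul_nonneg hposc (hXnn fs hfs s ⟨hs0.le, hsα⟩)))
    have hEfs0 : 0 < E1 α₀ a Lstar Nstar fs s := Real.exp_pos _
    have hLd : |Lstar fs s - Lstar f s| ≤ Lbar1 * δ := by
      rw [abs_sub_comm]; exact hLlip f fs hf hfs s ⟨hs0, hsα⟩
    have hP : 0 < s ^ μ := Real.rpow_pos_of_pos hs0 μ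
    have hQ : 0 < s ^ ν := Real.rpow_pos_of_pos hs0 ν
    have key : E1 α₀ a Lstar Nstar f s / (s * Lstar f s)
          - E1 α₀ a Lstar Nstar fs s / (s * Lstar fs s)
        = (E1 α₀ a Lstar Nstar f s - E1 α₀ a Lstar Nstar fs s) / (s * Lstar f s)
          + E1 α₀ a Lstar Nstar fs s * (Lstar fs s - Lstar f s)
            / (s * (Lstar f s * Lstar fs s)) := by
      field_simp; ring
    rw [key]
    have e1 : s ^ (μ+1) = s ^ μ * s := by
      rw [Real.rpow_add hs0, Real.rpow_one]
    have e2 : s ^ (2*μ-ν+1) = s ^ μ * (s ^ μ * ((s ^ ν)⁻¹ * s)) := by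
      rw [show 2*μ-ν+1 = μ + (μ + (-ν + 1)) by ring, Real.rpow_add hs0, Real.rpow_add hs0,
        Real.rpow_add hs0, Real.rpow_neg hs0.le, Real.rpow_one]
    have e3 : s ^ (2*μ) = s ^ μ * s ^ μ := by
      rw [show 2*μ = μ + μ by ring, Real.rpow_add hs0]
    have e4 : s ^ (3*μ-ν) = s ^ μ * (s ^ μ * (s ^ μ * (s ^ ν)⁻¹)) := by
      rw [show 3*μ-ν = μ + (μ + (μ + -ν)) by ring, Real.rpow_add hs0, Real.rpow_add hs0,
        Real.rpow_add hs0, Real.rpow_neg hs0.le]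
    have e5 : s ^ (2*μ-1) = s ^ μ * (s ^ μ * s⁻¹) := by
      rw [show 2*μ-1 = μ + (μ + -1) by ring, Real.rpow_add hs0, Real.rpow_add hs0,
        Real.rpow_neg hs0.le, Real.rpow_one]
    have hμ1' : (0:ℝ) < μ + 1 := by linarith
    have hexp2 : (0:ℝ) < 2*μ - ν + 1 := by linarith
    calc |(E1 α₀ a Lstar Nstar f s - E1 α₀ a Lstar Nstar fs s) / (s * Lstar f s)
          + E1 α₀ a Lstar Nstar fs s * (Lstar fs s - Lstar f s)
            / (s * (Lstar f s * Lstar fs s))|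
        ≤ |(E1 α₀ a Lstar Nstar f s - E1 α₀ a Lstar Nstar fs s) / (s * Lstar f s)|
          + |E1 α₀ a Lstar Nstar fs s * (Lstar fs s - Lstar f s)
            / (s * (Lstar f s * Lstar fs s))| := abs_add_le _ _
      _ ≤ (α₀ * a * (Nbar1 / (L1m * (μ+1)) * s ^ (μ+1)
              + Lbar1 * N1M / (L1m^2 * (2*μ - ν + 1)) * s ^ (2*μ - ν + 1)) * δ)
            / (s * (L1m / s ^ μ))
          + 1 * (Lbar1 * δ) / (s * (L1m / s ^ μ * (L1m / s ^ μ))) := by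
          gcongr ?_ + ?_
          · rw [abs_div, abs_of_pos (mul_pos hs0 hLf)]
            gcongr
          · rw [abs_div, abs_mul, abs_of_pos hEfs0,
              abs_of_pos (mul_pos hs0 (mul_pos hLf hLfs))]
            gcongr
      _ = (α₀ * a * (Nbar1 / (L1m^2 * (μ+1)) * s ^ (2*μ)
              + Lbar1 * N1M / (L1m^3 * (2*μ - ν + 1)) * s ^ (3*μ - ν))
            + Lbar1 / L1m^2 * s ^ (2*μ - 1)) * δ := by
          rw [e1, e2, e3, e4, e5]
          exact aux_id (α₀*a) Nbar1 (Lbar1*N1M) Lbar1 L1m (s^μ) (s^ν) s δ (μ+1)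
            (2*μ-ν+1) hL1m.ne' hP.ne' hQ.ne' hs0.ne' hμ1'.ne' hexp2.ne'
  -- final assembly
  have hη0 : (0:ℝ) ≤ η := hη.1
  have hI1 : IntervalIntegrable (fun s : ℝ => s ^ (2*μ)) volume 0 η :=
    intervalIntegral.intervalIntegrable_rpow' (by linarith)
  have hI2 : IntervalIntegrable (fun s : ℝ => s ^ (3*μ - ν)) volume 0 η :=
    intervalIntegral.intervalIntegrable_rpow' (by linarith)
  have hI3 : IntervalIntegrable (fun s : ℝ => s ^ (2*μ - 1)) volume 0 η :=
    intervalIntegral.intervalIntegrable_rpow' (by linarith)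
  have hIntB : IntervalIntegrable (fun s : ℝ =>
      (α₀ * a * (Nbar1 / (L1m^2 * (μ+1)) * s ^ (2*μ)
          + Lbar1 * N1M / (L1m^3 * (2*μ - ν + 1)) * s ^ (3*μ - ν))
        + Lbar1 / L1m^2 * s ^ (2*μ - 1)) * δ) volume 0 η :=
    ((((hI1.const_mul _).add (hI2.const_mul _)).const_mul _).add
      (hI3.const_mul _)).mul_const _
  have h2μ1 : (0:ℝ) < 2*μ + 1 := by linarith
  have h3μν1 : (0:ℝ) < 3*μ - ν + 1 := by linarith
  have h2μ : (0:ℝ) < 2*μ := by linarith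
  have hμ1' : (0:ℝ) < μ + 1 := by linarith
  have hexp2 : (0:ℝ) < 2*μ - ν + 1 := by linarith
  have hvalη : (∫ s in (0:ℝ)..η,
        (α₀ * a * (Nbar1 / (L1m^2 * (μ+1)) * s ^ (2*μ)
            + Lbar1 * N1M / (L1m^3 * (2*μ - ν + 1)) * s ^ (3*μ - ν))
          + Lbar1 / L1m^2 * s ^ (2*μ - 1)) * δ)
      = (α₀ * a * (Nbar1 / (L1m^2 * (μ+1)) * (η ^ (2*μ+1) / (2*μ+1))
            + Lbar1 * N1M / (L1m^3 * (2*μ - ν + 1)) * (η ^ (3*μ-ν+1) / (3*μ-ν+1)))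
          + Lbar1 / L1m^2 * (η ^ (2*μ) / (2*μ))) * δ := by
    rw [intervalIntegral.integral_mul_const,
      intervalIntegral.integral_add
        (((hI1.const_mul _).add (hI2.const_mul _)).const_mul _) (hI3.const_mul _),
      intervalIntegral.integral_const_mul,
      intervalIntegral.integral_add (hI1.const_mul _) (hI2.const_mul _),
      intervalIntegral.integral_const_mul, intervalIntegral.integral_const_mul,
      intervalIntegral.integral_const_mul,
      integral_rpow (Or.inl (by linarith)), integral_rpow (Or.inl (by linarith)),
      integral_rpow (Or.inl (by linarith)),
      Real.zero_rpow (by linarith), Real.zero_rpow (by linarith),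
      Real.zero_rpow (by linarith)]
    ring_nf
  have hq1 : 0 ≤ η ^ (2*μ+1) := Real.rpow_nonneg hη0 _
  have hq2 : 0 ≤ η ^ (3*μ-ν+1) := Real.rpow_nonneg hη0 _
  have hq3 : 0 ≤ η ^ (2*μ) := Real.rpow_nonneg hη0 _
  have hnn : 0 ≤ (α₀ * a * (Nbar1 / (L1m^2 * (μ+1)) * (η ^ (2*μ+1) / (2*μ+1))
        + Lbar1 * N1M / (L1m^3 * (2*μ - ν + 1)) * (η ^ (3*μ-ν+1) / (3*μ-ν+1)))
      + Lbar1 / L1m^2 * (η ^ (2*μ) / (2*μ))) * δ := by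
    apply mul_nonneg _ hδ0
    apply add_nonneg
    · apply mul_nonneg (by positivity)
      apply add_nonneg
      · exact mul_nonneg (by positivity) (div_nonneg hq1 h2μ1.le)
      · exact mul_nonneg (by positivity) (div_nonneg hq2 h3μν1.le)
    · exact mul_nonneg (by positivity) (div_nonneg hq3 h2μ.le)
  have hp1 : η ^ (2*μ+1) ≤ α₀ ^ (2*μ+1) := Real.rpow_le_rpow hη0 hη.2 h2μ1.le
  have hp2 : η ^ (3*μ-ν+1) ≤ α₀ ^ (3*μ-ν+1) := Real.rpow_le_rpow hη0 hη.2 h3μν1.le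
  have hp3 : η ^ (2*μ) ≤ α₀ ^ (2*μ) := Real.rpow_le_rpow hη0 hη.2 h2μ.le
  calc |F1 α₀ a Lstar Nstar f η - F1 α₀ a Lstar Nstar fs η|
      = |∫ s in (0:ℝ)..η, (E1 α₀ a Lstar Nstar f s / (s * Lstar f s)
          - E1 α₀ a Lstar Nstar fs s / (s * Lstar fs s))| := by
        rw [F1, F1, intervalIntegral.integral_sub (hint2 f hf η hη) (hint2 fs hfs η hη)]
    _ ≤ |∫ s in (0:ℝ)..η,
          (α₀ * a * (Nbar1 / (L1m^2 * (μ+1)) * s ^ (2*μ)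
              + Lbar1 * N1M / (L1m^3 * (2*μ - ν + 1)) * s ^ (3*μ - ν))
            + Lbar1 / L1m^2 * s ^ (2*μ - 1)) * δ| := by
        rw [← Real.norm_eq_abs (∫ s in (0:ℝ)..η, (E1 α₀ a Lstar Nstar f s / (s * Lstar f s)
          - E1 α₀ a Lstar Nstar fs s / (s * Lstar fs s)))]
        apply intervalIntegral.norm_integral_le_abs_of_norm_le _ hIntB
        refine (ae_restrict_iff' measurableSet_uIoc).mpr (ae_of_all _ fun t ht => ?_)
        rw [Set.uIoc_of_le hη0] at ht
        rw [Real.norm_eq_abs]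
        exact hC t ⟨ht.1, ht.2.trans hη.2⟩
    _ = (α₀ * a * (Nbar1 / (L1m^2 * (μ+1)) * (η ^ (2*μ+1) / (2*μ+1))
            + Lbar1 * N1M / (L1m^3 * (2*μ - ν + 1)) * (η ^ (3*μ-ν+1) / (3*μ-ν+1)))
          + Lbar1 / L1m^2 * (η ^ (2*μ) / (2*μ))) * δ := by
        rw [hvalη, abs_of_nonneg hnn]
    _ ≤ (α₀ * a * (Nbar1 / (L1m^2 * (μ+1)) * (α₀ ^ (2*μ+1) / (2*μ+1))
            + Lbar1 * N1M / (L1m^3 * (2*μ - ν + 1)) * (α₀ ^ (3*μ-ν+1) / (3*μ-ν+1)))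
          + Lbar1 / L1m^2 * (α₀ ^ (2*μ) / (2*μ))) * δ := by
        apply mul_le_mul_of_nonneg_right _ hδ0
        apply add_le_add
        · apply mul_le_mul_of_nonneg_left _ (by positivity : (0:ℝ) ≤ α₀ * a)
          apply add_le_add
          · exact mul_le_mul_of_nonneg_left ((div_le_div_iff_of_pos_right h2μ1).mpr hp1)
              (by positivity)
          · exact mul_le_mul_of_nonneg_left ((div_le_div_iff_of_pos_right h3μν1).mpr hp2)
              (by positivity)
        · exact mul_le_mul_of_nonneg_left ((div_le_div_iff_of_pos_right h2μ).mpr hp3)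
            (by positivity)
    _ = _ := aux_id2 (α₀*a) Nbar1 (Lbar1*N1M) Lbar1 L1m δ (μ+1) (2*μ-ν+1) (2*μ+1)
        (3*μ-ν+1) (2*μ) (α₀ ^ (2*μ+1)) (α₀ ^ (3*μ-ν+1)) (α₀ ^ (2*μ))
        hL1m.ne' hμ1'.ne' hexp2.ne' h2μ1.ne' h3μν1.ne' h2μ.ne'
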